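/- If f : [0,1] → ℝ is continuously differentiable, then for every n > 1 and x ∈ [0,1], |R_n(f;x) − f(x)| ≤ n^{−1/2} ω₁(n^{−1/2}) (x(1−x)(1−min{x,1−x}) + √(x(1−x)(1−min{x,1−x}))), where ω₁ is the modulus of continuity of f′. -/

import Mathlib

/-- Generalized rising factorial with increment `h`: `x^(m,h) = x(x+h)···(x+(m-1)h)`. -/
noncomputable def rfac (x h : ℝ) (m : ℕ) : ℝ := ∏ i ∈ Finset.range m, (x + i * h)

/-- Pólya urn probability `p_{n,k}^{a,b,c}`. -/
noncomputable def polyaProb (a b c : ℝ) (n k : ℕ) : ℝ :=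
  (n.choose k : ℝ) * rfac a c k * rfac b c (n - k) / rfac (a + b) c n

/-- The operator `R_n(f;x)` with `c = -min{x,1-x}/(n-1)`. -/
noncomputable def Rop (n : ℕ) (f : ℝ → ℝ) (x : ℝ) : ℝ :=
  ∑ k ∈ Finset.range (n + 1),
    polyaProb x (1 - x) (-(min x (1 - x)) / ((n : ℝ) - 1)) n k * f ((k : ℝ) / n)

/-- Modulus of continuity of `f` on `[a,b]`. -/
noncomputable def modulus (f : ℝ → ℝ) (a b δ : ℝ) : ℝ :=
  sSup {d : ℝ | ∃ u ∈ Set.Icc a b, ∃ v ∈ Set.Icc a b, |u - v| ≤ δ ∧ d = |f u - f v|}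

set_option linter.unusedSectionVars false
set_option maxHeartbeats 1000000

lemma rfacDivHelper (A R d : ℝ) (hR : R ≠ 0) : A * R / (d * R) = A / d := by
  rw [mul_comm d R, ← div_div, mul_div_assoc, div_self hR, mul_one]

lemma rfac_zero (x h : ℝ) : rfac x h 0 = 1 := by simp [rfac]

lemma rfac_succ (x h : ℝ) (m : ℕ) : rfac x h (m+1) = rfac x h m * (x + m * h) :=
  Finset.prod_range_succ _ _

lemma rfac_shift (x h : ℝ) (m : ℕ) : rfac x h (m+1) = x * rfac (x+h) h m := by
  have := Finset.prod_range_succ' (fun i : ℕ => x + (i:ℝ) * h) m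
  simp only [Nat.cast_zero, zero_mul, add_zero] at this
  rw [rfac, this, mul_comm]
  unfold rfac
  congr 1
  refine Finset.prod_congr rfl fun i _ => ?_
  push_cast; ring

lemma vand (c a b : ℝ) : ∀ n : ℕ, ∑ k ∈ Finset.range (n+1),
    (n.choose k : ℝ) * rfac a c k * rfac b c (n-k) = rfac (a+b) c n := by
  intro n
  induction n with
  | zero => simp [rfac]
  | succ n ih =>
    rw [Finset.sum_range_succ' _ (n+1)]
    have h1 : ∀ j ∈ Finset.range (n+1),
        ((n+1).choose (j+1) : ℝ) * rfac a c (j+1) * rfac b c (n+1-(j+1))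
        = (n.choose j : ℝ) * rfac a c (j+1) * rfac b c (n-j)
          + (n.choose (j+1) : ℝ) * rfac a c (j+1) * rfac b c (n-j) := by
      intro j hj
      have : (n+1).choose (j+1) = n.choose j + n.choose (j+1) := Nat.choose_succ_succ' n j
      rw [this]
      have : n + 1 - (j+1) = n - j := by omega
      rw [this]; push_cast; ring
    rw [Finset.sum_congr rfl h1, Finset.sum_add_distrib]
    -- second sum plus the k=0 term equals ∑_{k<n+1} C(n,k) rfac a k * rfac b (n+1-k)
    have h2 : (∑ j ∈ Finset.range (n+1), (n.choose (j+1) : ℝ) * rfac a c (j+1) * rfac b c (n-j))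
        + ((n+1).choose 0 : ℝ) * rfac a c 0 * rfac b c (n+1-0)
        = ∑ k ∈ Finset.range (n+1), (n.choose k : ℝ) * rfac a c k * rfac b c (n+1-k) := by
      rw [Finset.sum_range_succ]
      have hz : (n.choose (n+1) : ℝ) = 0 := by
        simp [Nat.choose_eq_zero_of_lt (Nat.lt_succ_self n)]
      rw [hz, Finset.sum_range_succ' (fun k => (n.choose k : ℝ) * rfac a c k * rfac b c (n+1-k)) n]
      simp only [Nat.choose_zero_right, Nat.cast_one, rfac_zero, zero_mul, Nat.sub_zero]
      have he : ∀ j ∈ Finset.range n,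
          (n.choose (j+1) : ℝ) * rfac a c (j+1) * rfac b c (n+1-(j+1))
          = (n.choose (j+1) : ℝ) * rfac a c (j+1) * rfac b c (n-j) := by
        intro j hj
        have : n + 1 - (j+1) = n - j := by omega
        rw [this]
      rw [Finset.sum_congr rfl he]
      ring
    rw [add_assoc, h2]
    have h3 : ∀ k ∈ Finset.range (n+1),
        (n.choose k : ℝ) * rfac a c k * rfac b c (n+1-k)
        = (n.choose k : ℝ) * rfac a c k * rfac b c (n-k) * (b + ((n:ℝ)-k) * c) := by
      intro k hk
      have hkn : k ≤ n := Nat.lt_succ_iff.mp (Finset.mem_range.mp hk)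
      have : n + 1 - k = (n - k) + 1 := by omega
      rw [this, rfac_succ]
      have : ((n - k : ℕ) : ℝ) = (n:ℝ) - k := by
        rw [Nat.cast_sub hkn]
      rw [this]; ring
    have h4 : ∀ j ∈ Finset.range (n+1),
        (n.choose j : ℝ) * rfac a c (j+1) * rfac b c (n-j)
        = (n.choose j : ℝ) * rfac a c j * rfac b c (n-j) * (a + (j:ℝ) * c) := by
      intro j hj; rw [rfac_succ]; ring
    rw [Finset.sum_congr rfl h4, Finset.sum_congr rfl h3, ← Finset.sum_add_distrib]
    have h5 : ∀ k ∈ Finset.range (n+1),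
        (n.choose k : ℝ) * rfac a c k * rfac b c (n-k) * (a + (k:ℝ) * c)
        + (n.choose k : ℝ) * rfac a c k * rfac b c (n-k) * (b + ((n:ℝ)-k) * c)
        = ((n.choose k : ℝ) * rfac a c k * rfac b c (n-k)) * ((a+b) + (n:ℝ)*c) := by
      intro k _; ring
    rw [Finset.sum_congr rfl h5, ← Finset.sum_mul, ih, rfac_succ]

lemma mom1 (c a b : ℝ) (m : ℕ) :
    ∑ k ∈ Finset.range (m+2), (k:ℝ) * ((m+1).choose k : ℝ) * rfac a c k * rfac b c (m+1-k)
    = (m+1) * a * rfac (a+b+c) c m := by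
  rw [Finset.sum_range_succ' _ (m+1)]
  simp only [Nat.cast_zero, zero_mul, add_zero]
  push_cast
  have h1 : ∀ j ∈ Finset.range (m+1),
      ((j:ℝ)+1) * ((m+1).choose (j+1) : ℝ) * rfac a c (j+1) * rfac b c (m-j)
      = ((m:ℝ)+1) * a * ((m.choose j : ℝ) * rfac (a+c) c j * rfac b c (m-j)) := by
    intro j hj
    have hc : (m+1) * m.choose j = (m+1).choose (j+1) * (j+1) := Nat.add_one_mul_choose_eq m j
    have hcr : ((m:ℝ)+1) * (m.choose j : ℝ) = ((m+1).choose (j+1) : ℝ) * ((j:ℝ)+1) := by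
      exact_mod_cast congrArg (Nat.cast : ℕ → ℝ) hc
    rw [rfac_shift]
    linear_combination (-(a * rfac (a+c) c j * rfac b c (m-j))) * hcr
  calc (∑ j ∈ Finset.range (m+1),
        ((j:ℝ)+1) * ((m+1).choose (j+1) : ℝ) * rfac a c (j+1) * rfac b c (m-j))
      = ∑ j ∈ Finset.range (m+1),
        ((m:ℝ)+1) * a * ((m.choose j : ℝ) * rfac (a+c) c j * rfac b c (m-j)) :=
        Finset.sum_congr rfl h1
    _ = ((m:ℝ)+1) * a * ∑ j ∈ Finset.range (m+1),
        (m.choose j : ℝ) * rfac (a+c) c j * rfac b c (m-j) := by rw [Finset.mul_sum]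
    _ = (m+1) * a * rfac (a+b+c) c m := by rw [vand]; ring_nf

lemma mom2 (c a b : ℝ) (m : ℕ) :
    ∑ k ∈ Finset.range (m+3), (k:ℝ) * ((k:ℝ)-1) * ((m+2).choose k : ℝ) * rfac a c k * rfac b c (m+2-k)
    = (m+2) * (m+1) * (a*(a+c)) * rfac (a+b+2*c) c m := by
  rw [Finset.sum_range_succ' _ (m+2), Finset.sum_range_succ' _ (m+1)]
  simp only [Nat.cast_zero, zero_mul, add_zero, Nat.cast_one]
  push_cast
  have hone : ((1:ℕ):ℝ) * (((1:ℕ):ℝ)-1) = 0 := by norm_num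
  have h1 : ∀ j ∈ Finset.range (m+1),
      ((j:ℝ)+1+1) * (((j:ℝ)+1+1)-1) * ((m+2).choose (j+1+1) : ℝ) * rfac a c (j+1+1) * rfac b c (m-j)
      = ((m:ℝ)+2) * ((m:ℝ)+1) * (a*(a+c)) * ((m.choose j : ℝ) * rfac (a+2*c) c j * rfac b c (m-j)) := by
    intro j hj
    have hc1 : (m+2) * (m+1).choose (j+1) = (m+2).choose (j+2) * (j+2) := Nat.add_one_mul_choose_eq (m+1) (j+1)
    have hc2 : (m+1) * m.choose j = (m+1).choose (j+1) * (j+1) := Nat.add_one_mul_choose_eq m j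
    have hcr1 : ((m:ℝ)+2) * ((m+1).choose (j+1) : ℝ) = ((m+2).choose (j+2) : ℝ) * ((j:ℝ)+2) := by
      exact_mod_cast congrArg (Nat.cast : ℕ → ℝ) hc1
    have hcr2 : ((m:ℝ)+1) * (m.choose j : ℝ) = ((m+1).choose (j+1) : ℝ) * ((j:ℝ)+1) := by
      exact_mod_cast congrArg (Nat.cast : ℕ → ℝ) hc2
    have hrf : rfac a c (j+2) = a * ((a+c) * rfac (a+c+c) c j) := by
      rw [show j+2 = (j+1)+1 from rfl, rfac_shift, rfac_shift]
    have hj2 : (j:ℝ)+1+1 = (j:ℝ)+2 := by ring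
    rw [show j+1+1 = j+2 from rfl, hrf]
    have h2c : a+c+c = a+2*c := by ring
    rw [h2c]
    linear_combination (-((j:ℝ)+1) * (a*(a+c)*rfac (a+2*c) c j * rfac b c (m-j))) * hcr1
      + (-((m:ℝ)+2) * (a*(a+c)*rfac (a+2*c) c j * rfac b c (m-j))) * hcr2
  calc (∑ j ∈ Finset.range (m+1),
        ((j:ℝ)+1+1) * (((j:ℝ)+1+1)-1) * ((m+2).choose (j+1+1) : ℝ) * rfac a c (j+1+1) * rfac b c (m-j))
        + (1:ℝ) * ((1:ℝ)-1) * ((m+2).choose 1 : ℝ) * rfac a c 1 * rfac b c (m+1)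
      = ∑ j ∈ Finset.range (m+1),
        ((m:ℝ)+2) * ((m:ℝ)+1) * (a*(a+c)) * ((m.choose j : ℝ) * rfac (a+2*c) c j * rfac b c (m-j)) := by
        rw [Finset.sum_congr rfl h1]; norm_num
    _ = ((m:ℝ)+2) * ((m:ℝ)+1) * (a*(a+c)) * ∑ j ∈ Finset.range (m+1),
        (m.choose j : ℝ) * rfac (a+2*c) c j * rfac b c (m-j) := by rw [Finset.mul_sum]
    _ = (m+2) * (m+1) * (a*(a+c)) * rfac (a+b+2*c) c m := by rw [vand]; ring_nf

section modul
variable (f' : ℝ → ℝ) (hf' : ContinuousOn f' (Set.Icc (0 : ℝ) 1)) (δ : ℝ) (hδ : 0 < δ)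

include hf' in
lemma modulus_bdd : BddAbove {d : ℝ | ∃ u ∈ Set.Icc (0:ℝ) 1, ∃ v ∈ Set.Icc (0:ℝ) 1,
    |u - v| ≤ δ ∧ d = |f' u - f' v|} := by
  obtain ⟨M, hM⟩ := (isCompact_Icc.bddAbove_image hf'.norm).imp (fun M hM => hM)
  refine ⟨2 * M, fun d hd => ?_⟩
  obtain ⟨u, hu, v, hv, -, rfl⟩ := hd
  have h1 : |f' u| ≤ M := hM ⟨u, hu, rfl⟩
  have h2 : |f' v| ≤ M := hM ⟨v, hv, rfl⟩
  calc |f' u - f' v| ≤ |f' u| + |f' v| := abs_sub _ _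
    _ ≤ 2 * M := by linarith

include hf' hδ in
lemma le_modulus {u v : ℝ} (hu : u ∈ Set.Icc (0:ℝ) 1) (hv : v ∈ Set.Icc (0:ℝ) 1)
    (h : |u - v| ≤ δ) : |f' u - f' v| ≤ modulus f' 0 1 δ :=
  le_csSup (modulus_bdd f' hf' δ) ⟨u, hu, v, hv, h, rfl⟩

include hf' hδ in
lemma modulus_nonneg : 0 ≤ modulus f' 0 1 δ := by
  have := le_modulus f' hf' δ hδ (u := 0) (v := 0) (by norm_num) (by norm_num)
    (by simpa using hδ.le)
  simpa using (abs_nonneg _).trans this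

include hf' hδ in
lemma modulus_chain {u v : ℝ} (hu : u ∈ Set.Icc (0:ℝ) 1) (hv : v ∈ Set.Icc (0:ℝ) 1)
    (N : ℕ) (hN : 0 < N) (h : |u - v| ≤ N * δ) :
    |f' u - f' v| ≤ N * modulus f' 0 1 δ := by
  set g : ℕ → ℝ := fun j => f' (v + (j : ℝ) / N * (u - v)) with hg
  have hNR : (0:ℝ) < N := by exact_mod_cast hN
  have hmem : ∀ j : ℕ, j ≤ N → v + (j : ℝ) / N * (u - v) ∈ Set.Icc (0:ℝ) 1 := by
    intro j hj
    have ht0 : (0:ℝ) ≤ (j : ℝ) / N := by positivity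
    have ht1 : (j : ℝ) / N ≤ 1 := by
      rw [div_le_one hNR]; exact_mod_cast hj
    have := (convex_Icc (0:ℝ) 1).add_smul_sub_mem hv hu ⟨ht0, ht1⟩
    simpa [smul_eq_mul] using this
  have hstep : ∀ j ∈ Finset.range N, |g (j+1) - g j| ≤ modulus f' 0 1 δ := by
    intro j hj
    have hjN : j + 1 ≤ N := Finset.mem_range.mp hj
    refine le_modulus f' hf' δ hδ (hmem (j+1) hjN) (hmem j (by omega)) ?_
    have : (v + ((j:ℝ)+1) / N * (u - v)) - (v + (j : ℝ) / N * (u - v)) = (u - v) / N := by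
      field_simp; ring
    rw [show ((j+1 : ℕ) : ℝ) = (j:ℝ)+1 by push_cast; ring, this, abs_div, abs_of_pos hNR,
      div_le_iff₀ hNR]
    calc |u - v| ≤ N * δ := h
      _ = δ * N := by ring
  have htel : g N - g 0 = ∑ j ∈ Finset.range N, (g (j+1) - g j) := (Finset.sum_range_sub g N).symm
  have hgN : g N = f' u := by
    simp only [hg]
    rw [div_self (ne_of_gt hNR)]
    norm_num
  have hg0 : g 0 = f' v := by simp [hg]
  calc |f' u - f' v| = |∑ j ∈ Finset.range N, (g (j+1) - g j)| := by rw [← htel, hgN, hg0]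
    _ ≤ ∑ j ∈ Finset.range N, |g (j+1) - g j| := Finset.abs_sum_le_sum_abs _ _
    _ ≤ ∑ _j ∈ Finset.range N, modulus f' 0 1 δ := Finset.sum_le_sum hstep
    _ = N * modulus f' 0 1 δ := by rw [Finset.sum_const, Finset.card_range, nsmul_eq_mul]

end modul

lemma key_estimate (f f' : ℝ → ℝ)
    (hf : ∀ t ∈ Set.Icc (0 : ℝ) 1, HasDerivAt f (f' t) t)
    (hf' : ContinuousOn f' (Set.Icc (0 : ℝ) 1))
    (δ : ℝ) (hδ : 0 < δ) {x t : ℝ} (hx : x ∈ Set.Icc (0:ℝ) 1) (ht : t ∈ Set.Icc (0:ℝ) 1) :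
    |f t - f x - f' x * (t - x)| ≤ modulus f' 0 1 δ * (|t - x| + (t - x)^2 / δ) := by
  have hω := modulus_nonneg f' hf' δ hδ
  rcases eq_or_ne t x with heq | hne
  · rw [heq]
    have h0 : |f x - f x - f' x * (x - x)| = 0 := by simp
    rw [h0]
    positivity
  -- MVT on the interval between x and t
  have hmvt : ∃ ξ ∈ Set.Icc (0:ℝ) 1, |ξ - x| ≤ |t - x| ∧ f t - f x = f' ξ * (t - x) := by
    rcases lt_or_gt_of_ne hne with hlt | hgt
    · -- t < x
      have hsub : Set.Icc t x ⊆ Set.Icc (0:ℝ) 1 := Set.Icc_subset_Icc ht.1 hx.2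
      have hc : ContinuousOn f (Set.Icc t x) := fun y hy =>
        ((hf y (hsub hy)).continuousAt).continuousWithinAt
      have hd : ∀ y ∈ Set.Ioo t x, HasDerivAt f (f' y) y := fun y hy =>
        hf y (hsub (Set.mem_Icc_of_Ioo hy))
      obtain ⟨ξ, hξ, hslope⟩ := exists_hasDerivAt_eq_slope f f' hlt hc hd
      refine ⟨ξ, hsub (Set.mem_Icc_of_Ioo hξ), ?_, ?_⟩
      · rw [abs_sub_comm ξ x, abs_of_pos (by linarith [hξ.1, hξ.2] : (0:ℝ) < x - ξ),
          abs_sub_comm t x, abs_of_pos (by linarith : (0:ℝ) < x - t)]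
        linarith [hξ.1]
      · have hne' : x - t ≠ 0 := by intro h; apply hne; linarith
        field_simp at hslope
        linarith [hslope]
    · -- x < t
      have hsub : Set.Icc x t ⊆ Set.Icc (0:ℝ) 1 := Set.Icc_subset_Icc hx.1 ht.2
      have hc : ContinuousOn f (Set.Icc x t) := fun y hy =>
        ((hf y (hsub hy)).continuousAt).continuousWithinAt
      have hd : ∀ y ∈ Set.Ioo x t, HasDerivAt f (f' y) y := fun y hy =>
        hf y (hsub (Set.mem_Icc_of_Ioo hy))
      obtain ⟨ξ, hξ, hslope⟩ := exists_hasDerivAt_eq_slope f f' hgt hc hd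
      refine ⟨ξ, hsub (Set.mem_Icc_of_Ioo hξ), ?_, ?_⟩
      · rw [abs_of_pos (by linarith [hξ.1] : (0:ℝ) < ξ - x),
          abs_of_pos (by linarith : (0:ℝ) < t - x)]
        linarith [hξ.2]
      · have hne' : t - x ≠ 0 := by intro h; apply hne; linarith
        field_simp at hslope
        linarith [hslope]
  obtain ⟨ξ, hξmem, hξle, hfeq⟩ := hmvt
  have hN : ∃ N : ℕ, 0 < N ∧ |t - x| ≤ N * δ ∧ (N:ℝ) ≤ 1 + |t - x| / δ := by
    refine ⟨⌊|t - x| / δ⌋₊ + 1, Nat.succ_pos _, ?_, ?_⟩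
    · push_cast
      have := Nat.lt_floor_add_one (|t - x| / δ)
      calc |t - x| = |t - x| / δ * δ := by field_simp
        _ ≤ ((⌊|t - x| / δ⌋₊ : ℝ) + 1) * δ := by
            apply mul_le_mul_of_nonneg_right this.le hδ.le
    · push_cast
      have := Nat.floor_le (by positivity : (0:ℝ) ≤ |t - x| / δ)
      linarith
  obtain ⟨N, hN0, hNle, hNub⟩ := hN
  have hchain : |f' ξ - f' x| ≤ N * modulus f' 0 1 δ :=
    modulus_chain f' hf' δ hδ hξmem hx N hN0 (hξle.trans hNle)
  calc |f t - f x - f' x * (t - x)| = |f' ξ - f' x| * |t - x| := by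
        rw [hfeq, ← abs_mul]; ring_nf
    _ ≤ (N * modulus f' 0 1 δ) * |t - x| :=
        mul_le_mul_of_nonneg_right hchain (abs_nonneg _)
    _ ≤ ((1 + |t - x| / δ) * modulus f' 0 1 δ) * |t - x| := by
        apply mul_le_mul_of_nonneg_right _ (abs_nonneg _)
        exact mul_le_mul_of_nonneg_right hNub hω
    _ = modulus f' 0 1 δ * (|t - x| + (t - x)^2 / δ) := by
        linear_combination (modulus f' 0 1 δ / δ) * (sq_abs (t - x))


theorem Rop_deriv_estimate (f f' : ℝ → ℝ)
    (hf : ∀ t ∈ Set.Icc (0 : ℝ) 1, HasDerivAt f (f' t) t)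
    (hf' : ContinuousOn f' (Set.Icc (0 : ℝ) 1))
    (n : ℕ) (hn : 1 < n) (x : ℝ) (hx : x ∈ Set.Icc (0 : ℝ) 1) :
    |Rop n f x - f x| ≤
      (n : ℝ) ^ (-(1 : ℝ) / 2) * modulus f' 0 1 ((n : ℝ) ^ (-(1 : ℝ) / 2)) *
        (x * (1 - x) * (1 - min x (1 - x)) +
          Real.sqrt (x * (1 - x) * (1 - min x (1 - x)))) := by
  obtain ⟨M, rfl⟩ : ∃ M, n = M + 2 := ⟨n - 2, by omega⟩
  clear hn
  set m : ℝ := min x (1 - x) with hm_def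
  set nR : ℝ := ((M + 2 : ℕ) : ℝ) with hnR_def
  have hnR2 : nR = (M : ℝ) + 2 := by rw [hnR_def]; push_cast; ring
  have hnR0 : (0:ℝ) < nR := by rw [hnR2]; positivity
  have hM1 : (0:ℝ) < nR - 1 := by
    rw [hnR2]; have : (0:ℝ) ≤ (M:ℝ) := Nat.cast_nonneg M; linarith
  set c : ℝ := -m / (nR - 1) with hc_def
  have hx0 : 0 ≤ x := hx.1
  have hx1 : x ≤ 1 := hx.2
  have hm0 : 0 ≤ m := le_min hx0 (by linarith)
  have hmx : m ≤ x := min_le_left _ _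
  have hmx' : m ≤ 1 - x := min_le_right _ _
  have hmhalf : m ≤ 1/2 := by
    have := min_le_left x (1-x); have := min_le_right x (1-x); rw [hm_def]; cases le_total x (1-x) with
    | inl h => rw [min_eq_left h]; linarith
    | inr h => rw [min_eq_right h]; linarith
  have hc0 : c ≤ 0 := div_nonpos_of_nonpos_of_nonneg (by linarith) hM1.le
  have hcval : c * (nR - 1) = -m := by rw [hc_def]; field_simp
  have hcge : -m ≤ c := by
    rw [hc_def, le_div_iff₀ hM1]
    nlinarith
  have h1c : (1:ℝ)/2 ≤ 1 + c := by linarith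
  have h1c0 : (0:ℝ) < 1 + c := by linarith
  -- factor bounds
  have hfac : ∀ (y : ℝ), ∀ i : ℕ, (i:ℝ) ≤ nR - 1 → y - m ≤ y + (i:ℝ) * c := by
    intro y i hi
    nlinarith [mul_nonneg (by linarith : (0:ℝ) ≤ nR - 1 - i) (by linarith : (0:ℝ) ≤ -c)]
  have hile : ∀ i : ℕ, i < M + 2 → (i:ℝ) ≤ nR - 1 := by
    intro i hi; rw [hnR2]
    have : (i:ℝ) ≤ (M:ℝ) + 1 := by exact_mod_cast Nat.lt_succ_iff.mp hi
    linarith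
  have hA : ∀ k, k ≤ M + 2 → 0 ≤ rfac x c k := by
    intro k hk
    refine Finset.prod_nonneg fun i hi => ?_
    have hi' : i < M + 2 := lt_of_lt_of_le (Finset.mem_range.mp hi) hk
    have := hfac x i (hile i hi')
    linarith
  have hB : ∀ k, k ≤ M + 2 → 0 ≤ rfac (1-x) c k := by
    intro k hk
    refine Finset.prod_nonneg fun i hi => ?_
    have hi' : i < M + 2 := lt_of_lt_of_le (Finset.mem_range.mp hi) hk
    have := hfac (1-x) i (hile i hi')
    linarith
  have hD : 0 < rfac 1 c (M+2) := by
    refine Finset.prod_pos fun i hi => ?_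
    have := hfac 1 i (hile i (Finset.mem_range.mp hi))
    linarith
  have hxb : x + (1 - x) = 1 := by ring
  set p : ℕ → ℝ := fun k => polyaProb x (1-x) c (M+2) k with hp_def
  have hp_eq : ∀ k, p k = ((M+2).choose k : ℝ) * rfac x c k * rfac (1-x) c (M+2-k) / rfac 1 c (M+2) := by
    intro k; rw [hp_def]; simp only [polyaProb, hxb]
  have hp0 : ∀ k ∈ Finset.range (M+3), 0 ≤ p k := by
    intro k hk
    have hk' : k ≤ M + 2 := Nat.lt_succ_iff.mp (Finset.mem_range.mp hk)
    rw [hp_eq]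
    apply div_nonneg _ hD.le
    have h1 := hA k hk'
    have h2 := hB (M+2-k) (by omega)
    exact mul_nonneg (mul_nonneg (Nat.cast_nonneg _) h1) h2
  -- rfac shift identities for the denominator
  have hDs1 : rfac 1 c (M+2) = rfac (1+c) c (M+1) := by
    rw [show M+2 = (M+1)+1 from rfl, rfac_shift]; ring
  have hDs2 : rfac 1 c (M+2) = (1+c) * rfac (1+2*c) c M := by
    rw [hDs1, rfac_shift, show 1+c+c = 1+2*c by ring]
  -- moment sums
  have hsum0 : ∑ k ∈ Finset.range (M+3), p k = 1 := by
    have hv := vand c x (1-x) (M+2)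
    rw [hxb] at hv
    calc ∑ k ∈ Finset.range (M+3), p k
        = (∑ k ∈ Finset.range (M+3), ((M+2).choose k : ℝ) * rfac x c k * rfac (1-x) c (M+2-k))
          / rfac 1 c (M+2) := by
          rw [Finset.sum_div]; exact Finset.sum_congr rfl fun k _ => hp_eq k
      _ = 1 := by rw [hv]; field_simp
  have hsum1 : ∑ k ∈ Finset.range (M+3), p k * (k:ℝ) = nR * x := by
    have hv := mom1 c x (1-x) (M+1)
    rw [show x + (1-x) + c = 1 + c by ring] at hv
    calc ∑ k ∈ Finset.range (M+3), p k * (k:ℝ)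
        = (∑ k ∈ Finset.range (M+3), (k:ℝ) * ((M+2).choose k : ℝ) * rfac x c k * rfac (1-x) c (M+2-k))
          / rfac 1 c (M+2) := by
          rw [Finset.sum_div]
          refine Finset.sum_congr rfl fun k _ => ?_
          rw [hp_eq]; ring
      _ = nR * x := by
          rw [show M+1+2 = M+3 from rfl] at hv
          have hne : rfac (1+c) c (M+1) ≠ 0 := by rw [← hDs1]; exact hD.ne'
          rw [hv, hDs1, mul_div_assoc, div_self hne, mul_one, hnR2]
          push_cast; ring
  have hsum2 : ∑ k ∈ Finset.range (M+3), p k * ((k:ℝ) * ((k:ℝ)-1))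
      = nR * (nR - 1) * (x*(x+c)) / (1+c) := by
    have hv := mom2 c x (1-x) M
    rw [show x + (1-x) + 2*c = 1 + 2*c by ring] at hv
    calc ∑ k ∈ Finset.range (M+3), p k * ((k:ℝ) * ((k:ℝ)-1))
        = (∑ k ∈ Finset.range (M+3), (k:ℝ) * ((k:ℝ)-1) * ((M+2).choose k : ℝ) * rfac x c k * rfac (1-x) c (M+2-k))
          / rfac 1 c (M+2) := by
          rw [Finset.sum_div]
          refine Finset.sum_congr rfl fun k _ => ?_
          rw [hp_eq]; ring
      _ = nR * (nR - 1) * (x*(x+c)) / (1+c) := by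
          have hne : rfac (1+2*c) c M ≠ 0 := by
            intro h
            rw [hDs2, h, mul_zero] at hD
            exact lt_irrefl _ hD
          rw [hv, hDs2, rfacDivHelper _ _ _ hne, hnR2]
          ring
  -- variance computation
  set T : ℝ := x * (1 - x) * (1 - m) with hT_def
  have hT0 : 0 ≤ T := by
    rw [hT_def]
    have : 0 ≤ 1 - m := by linarith
    have h1x : 0 ≤ 1 - x := by linarith
    positivity
  have hQval : ∑ k ∈ Finset.range (M+3), p k * ((k:ℝ)/nR - x)^2
      = x*(1-x)*(1+nR*c)/(nR*(1+c)) := by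
    have hexp : ∀ k ∈ Finset.range (M+3), p k * ((k:ℝ)/nR - x)^2
        = (p k * ((k:ℝ) * ((k:ℝ)-1))) * (nR⁻¹*nR⁻¹)
          + (p k * (k:ℝ)) * (nR⁻¹*nR⁻¹ - 2*x*nR⁻¹) + (p k) * x^2 := by
      intro k _
      field_simp
      ring
    rw [Finset.sum_congr rfl hexp, Finset.sum_add_distrib, Finset.sum_add_distrib,
      ← Finset.sum_mul, ← Finset.sum_mul, ← Finset.sum_mul, hsum0, hsum1, hsum2]
    field_simp
    ring
  have hQle : ∑ k ∈ Finset.range (M+3), p k * ((k:ℝ)/nR - x)^2 ≤ T / nR := by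
    rw [hQval]
    rw [div_le_div_iff₀ (by positivity) hnR0]
    have hdiff : T * (nR*(1+c)) - (x*(1-x)*(1+nR*c)) * nR = x*(1-x)*nR*(m*(-c)) := by
      rw [hT_def]
      linear_combination (-(x*(1-x)*nR)) * hcval
    nlinarith [mul_nonneg (mul_nonneg (mul_nonneg hx0 (by linarith : (0:ℝ) ≤ 1-x)) hnR0.le)
      (mul_nonneg hm0 (by linarith : (0:ℝ) ≤ -c))]
  have hQ0 : 0 ≤ ∑ k ∈ Finset.range (M+3), p k * ((k:ℝ)/nR - x)^2 :=
    Finset.sum_nonneg fun k hk => mul_nonneg (hp0 k hk) (sq_nonneg _)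
  set Q : ℝ := ∑ k ∈ Finset.range (M+3), p k * ((k:ℝ)/nR - x)^2 with hQ_def
  -- Cauchy-Schwarz
  have hCS : ∑ k ∈ Finset.range (M+3), p k * |(k:ℝ)/nR - x| ≤ Real.sqrt Q := by
    have hL0 : 0 ≤ ∑ k ∈ Finset.range (M+3), p k * |(k:ℝ)/nR - x| :=
      Finset.sum_nonneg fun k hk => mul_nonneg (hp0 k hk) (abs_nonneg _)
    rw [Real.le_sqrt hL0 hQ0]
    have hrw : ∀ k ∈ Finset.range (M+3), p k * |(k:ℝ)/nR - x|
        = Real.sqrt (p k) * (Real.sqrt (p k) * |(k:ℝ)/nR - x|) := by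
      intro k hk
      rw [← mul_assoc, Real.mul_self_sqrt (hp0 k hk)]
    rw [Finset.sum_congr rfl hrw]
    calc (∑ k ∈ Finset.range (M+3), Real.sqrt (p k) * (Real.sqrt (p k) * |(k:ℝ)/nR - x|))^2
        ≤ (∑ k ∈ Finset.range (M+3), Real.sqrt (p k)^2)
          * ∑ k ∈ Finset.range (M+3), (Real.sqrt (p k) * |(k:ℝ)/nR - x|)^2 :=
          Finset.sum_mul_sq_le_sq_mul_sq _ _ _
      _ = Q := by
          have e1 : ∀ k ∈ Finset.range (M+3), Real.sqrt (p k)^2 = p k := fun k hk =>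
            Real.sq_sqrt (hp0 k hk)
          have e2 : ∀ k ∈ Finset.range (M+3), (Real.sqrt (p k) * |(k:ℝ)/nR - x|)^2
              = p k * ((k:ℝ)/nR - x)^2 := by
            intro k hk
            rw [mul_pow, Real.sq_sqrt (hp0 k hk), sq_abs]
          rw [Finset.sum_congr rfl e1, Finset.sum_congr rfl e2, hsum0, one_mul, hQ_def]
  -- delta
  set δ : ℝ := nR ^ (-(1:ℝ)/2) with hδ_def
  have hδpos : 0 < δ := Real.rpow_pos_of_pos hnR0 _
  have hδsq : δ * δ = nR⁻¹ := by
    rw [hδ_def, ← Real.rpow_add hnR0]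
    norm_num [Real.rpow_neg_one]
  have hδsqrt : Real.sqrt nR⁻¹ = δ := by
    rw [← hδsq, Real.sqrt_mul_self hδpos.le]
  set ω : ℝ := modulus f' 0 1 δ with hω_def
  have hω0 : 0 ≤ ω := modulus_nonneg f' hf' δ hδpos
  have htk : ∀ k ∈ Finset.range (M+3), (k:ℝ)/nR ∈ Set.Icc (0:ℝ) 1 := by
    intro k hk
    have hk' : k ≤ M + 2 := Nat.lt_succ_iff.mp (Finset.mem_range.mp hk)
    constructor
    · positivity
    · rw [div_le_one hnR0, hnR_def]; exact_mod_cast hk'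
  have hkey : ∀ k ∈ Finset.range (M+3),
      |f ((k:ℝ)/nR) - f x - f' x * ((k:ℝ)/nR - x)|
        ≤ ω * (|(k:ℝ)/nR - x| + ((k:ℝ)/nR - x)^2/δ) :=
    fun k hk => key_estimate f f' hf hf' δ hδpos hx (htk k hk)
  have hQ1 : ∑ k ∈ Finset.range (M+3), p k * ((k:ℝ)/nR - x) = 0 := by
    have hexp : ∀ k ∈ Finset.range (M+3), p k * ((k:ℝ)/nR - x)
        = (p k * (k:ℝ)) * nR⁻¹ - p k * x := by
      intro k _; field_simp
    rw [Finset.sum_congr rfl hexp, Finset.sum_sub_distrib, ← Finset.sum_mul, ← Finset.sum_mul,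
      hsum0, hsum1]
    field_simp
    ring
  have hRop_eq : Rop (M+2) f x = ∑ k ∈ Finset.range (M+3), p k * f ((k:ℝ)/nR) := rfl
  have hRdiff : Rop (M+2) f x - f x
      = ∑ k ∈ Finset.range (M+3), p k * (f ((k:ℝ)/nR) - f x - f' x * ((k:ℝ)/nR - x)) := by
    rw [hRop_eq]
    have hexpand : ∀ k ∈ Finset.range (M+3),
        p k * (f ((k:ℝ)/nR) - f x - f' x * ((k:ℝ)/nR - x))
        = p k * f ((k:ℝ)/nR) - p k * f x - f' x * (p k * ((k:ℝ)/nR - x)) := by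
      intro k _; ring
    rw [Finset.sum_congr rfl hexpand, Finset.sum_sub_distrib, Finset.sum_sub_distrib,
      ← Finset.sum_mul, ← Finset.mul_sum, hsum0, hQ1, one_mul, mul_zero, sub_zero]
  have e1 : Real.sqrt (T/nR) = Real.sqrt T * δ := by
    rw [div_eq_mul_inv, Real.sqrt_mul hT0, hδsqrt]
  have e2 : (ω/δ) * (T/nR) = ω * T * δ := by
    rw [div_eq_mul_inv T nR, ← hδsq]
    field_simp
  have hsqrtQ : Real.sqrt Q ≤ Real.sqrt T * δ := by
    rw [← e1]; exact Real.sqrt_le_sqrt hQle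
  rw [hRdiff]
  calc |∑ k ∈ Finset.range (M+3), p k * (f ((k:ℝ)/nR) - f x - f' x * ((k:ℝ)/nR - x))|
      ≤ ∑ k ∈ Finset.range (M+3), p k * (ω * (|(k:ℝ)/nR - x| + ((k:ℝ)/nR - x)^2/δ)) := by
        refine (Finset.abs_sum_le_sum_abs _ _).trans (Finset.sum_le_sum fun k hk => ?_)
        rw [abs_mul, abs_of_nonneg (hp0 k hk)]
        exact mul_le_mul_of_nonneg_left (hkey k hk) (hp0 k hk)
    _ = ω * (∑ k ∈ Finset.range (M+3), p k * |(k:ℝ)/nR - x|) + (ω/δ) * Q := by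
        rw [hQ_def, Finset.mul_sum, Finset.mul_sum, ← Finset.sum_add_distrib]
        refine Finset.sum_congr rfl fun k _ => ?_
        field_simp
    _ ≤ ω * (Real.sqrt T * δ) + (ω/δ) * (T/nR) := by
        have t1 : ω * (∑ k ∈ Finset.range (M+3), p k * |(k:ℝ)/nR - x|)
            ≤ ω * (Real.sqrt T * δ) :=
          mul_le_mul_of_nonneg_left (hCS.trans hsqrtQ) hω0
        have t2 : (ω/δ) * Q ≤ (ω/δ) * (T/nR) :=
          mul_le_mul_of_nonneg_left hQle (by positivity)
        linarith
    _ = δ * ω * (T + Real.sqrt T) := by rw [e2]; ring
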